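/- Let 𝒜 be a finite nonempty set and let S be a nonempty closed convex set of probability distributions on 𝒜. If σ* maximizes the Shannon entropy H over S, then σ* minimizes over S the worst-case log-loss against an adversary constrained to S: for every σ̂ ∈ S, sup_{σ∈S} H(σ, σ*) ≤ sup_{σ∈S} H(σ, σ̂), where H(σ, σ̂) denotes the cross-entropy (expected log-loss). -/

import Mathlib

open scoped BigOperators ENNReal

open Real Filter Topology

/-- `σ` is a probability distribution on the finite set `A`. -/
def IsProb {A : Type} [Fintype A] (σ : A → ℝ) : Prop :=
  (∀ a, 0 ≤ σ a) ∧ ∑ a, σ a = 1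

/-- Shannon entropy `H(σ) = -∑ σ(a) log σ(a)` (with `0 log 0 = 0`, as
`Real.log 0 = 0`). -/
noncomputable def shannonEntropy {A : Type} [Fintype A] (σ : A → ℝ) : ℝ :=
  -∑ a, σ a * Real.log (σ a)

/-- Cross-entropy `H(σ, σ̂) = ∑ σ(a) · (-log σ̂(a))`, valued in `[0,∞]` with the
conventions `0 · ∞ = 0` and `-log 0 = ∞`. -/
noncomputable def crossEntropy {A : Type} [Fintype A] (σ σhat : A → ℝ) : ℝ≥0∞ :=
  ∑ a, ENNReal.ofReal (σ a) *
    (if σhat a = 0 then ⊤ else ENNReal.ofReal (-Real.log (σhat a)))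

lemma IsProb.le_one {A : Type} [Fintype A] {σ : A → ℝ} (h : IsProb σ) (a : A) : σ a ≤ 1 := by
  rw [← h.2]
  exact Finset.single_le_sum (fun b _ => h.1 b) (Finset.mem_univ a)

lemma shannonEntropy_eq {A : Type} [Fintype A] (σ : A → ℝ) :
    shannonEntropy σ = ∑ a, Real.negMulLog (σ a) := by
  simp [shannonEntropy, Real.negMulLog, ← Finset.sum_neg_distrib, neg_mul]

/-- Gibbs' inequality, real version. -/
lemma gibbs_real {A : Type} [Fintype A] {σ τ : A → ℝ} (hσ : IsProb σ) (hτ : IsProb τ)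
    (hsupp : ∀ a, τ a = 0 → σ a = 0) :
    shannonEntropy σ ≤ ∑ a, σ a * (-Real.log (τ a)) := by
  have key : ∀ a, σ a * (Real.log (τ a) - Real.log (σ a)) ≤ τ a - σ a := by
    intro a
    rcases eq_or_lt_of_le (hσ.1 a) with h0 | hpos
    · simp [← h0, hτ.1 a]
    · have hτpos : 0 < τ a := by
        rcases eq_or_lt_of_le (hτ.1 a) with h0' | h
        · exact absurd (hsupp a h0'.symm) (ne_of_gt hpos)
        · exact h
      have hlog : Real.log (τ a) - Real.log (σ a) = Real.log (τ a / σ a) := by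
        rw [Real.log_div (ne_of_gt hτpos) (ne_of_gt hpos)]
      rw [hlog]
      have := Real.log_le_sub_one_of_pos (div_pos hτpos hpos)
      calc σ a * Real.log (τ a / σ a) ≤ σ a * (τ a / σ a - 1) := by
            exact mul_le_mul_of_nonneg_left this (le_of_lt hpos)
        _ = τ a - σ a := by field_simp
  have hsum : ∑ a, σ a * (Real.log (τ a) - Real.log (σ a)) ≤ 0 := by
    have h1 : ∑ a, σ a * (Real.log (τ a) - Real.log (σ a)) ≤ ∑ a, (τ a - σ a) :=
      Finset.sum_le_sum fun a _ => key a
    have h2 : ∑ a, (τ a - σ a) = 0 := by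
      rw [Finset.sum_sub_distrib, hσ.2, hτ.2, sub_self]
    linarith
  have hSE : shannonEntropy σ = ∑ a, σ a * (-Real.log (σ a)) := by
    rw [shannonEntropy, ← Finset.sum_neg_distrib]
    exact Finset.sum_congr rfl fun a _ => by ring
  have h3 : ∑ a, σ a * (Real.log (τ a) - Real.log (σ a))
      = shannonEntropy σ - ∑ a, σ a * (-Real.log (τ a)) := by
    rw [hSE, ← Finset.sum_sub_distrib]
    exact Finset.sum_congr rfl fun a _ => by ring
  linarith

/-- Cross entropy as `ofReal` of a real sum when supports are compatible. -/
lemma crossEntropy_eq_ofReal {A : Type} [Fintype A] {σ τ : A → ℝ} (hσ : IsProb σ) (hτ : IsProb τ)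
    (hsupp : ∀ a, τ a = 0 → σ a = 0) :
    crossEntropy σ τ = ENNReal.ofReal (∑ a, σ a * (-Real.log (τ a))) := by
  have hnonneg : ∀ a ∈ Finset.univ, 0 ≤ σ a * (-Real.log (τ a)) := by
    intro a _
    apply mul_nonneg (hσ.1 a)
    simp only [neg_nonneg]
    exact Real.log_nonpos (hτ.1 a) (hτ.le_one a)
  rw [crossEntropy, ENNReal.ofReal_sum_of_nonneg hnonneg]
  apply Finset.sum_congr rfl
  intro a _
  by_cases h : τ a = 0
  · simp [h, hsupp a h]
  · rw [if_neg h, ← ENNReal.ofReal_mul (hσ.1 a)]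

/-- Gibbs' inequality, `ℝ≥0∞` version. -/
lemma gibbs {A : Type} [Fintype A] {σ τ : A → ℝ} (hσ : IsProb σ) (hτ : IsProb τ) :
    ENNReal.ofReal (shannonEntropy σ) ≤ crossEntropy σ τ := by
  by_cases hsupp : ∀ a, τ a = 0 → σ a = 0
  · rw [crossEntropy_eq_ofReal hσ hτ hsupp]
    exact ENNReal.ofReal_le_ofReal (gibbs_real hσ hτ hsupp)
  · push_neg at hsupp
    obtain ⟨a, hτa, hσa⟩ := hsupp
    have : crossEntropy σ τ = ⊤ := by
      rw [crossEntropy, ENNReal.sum_eq_top]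
      refine ⟨a, Finset.mem_univ a, ?_⟩
      rw [if_pos hτa, ENNReal.mul_top]
      simp only [ne_eq, ENNReal.ofReal_eq_zero, not_le]
      exact lt_of_le_of_ne (hσ.1 a) (Ne.symm hσa)
    rw [this]
    exact le_top

/-- The difference quotient of `negMulLog` along an affine path tends to the derivative. -/
lemma tendsto_quot {c d : ℝ} (hc : c ≠ 0) :
    Tendsto (fun t : ℝ => (Real.negMulLog (c + t * d) - Real.negMulLog c) / t)
      (𝓝[>] (0:ℝ)) (𝓝 (d * (-Real.log c - 1))) := by
  have h1 : HasDerivAt (fun t : ℝ => c + t * d) d 0 :=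
    (hasDerivAt_mul_const d).const_add c
  have h2 : HasDerivAt Real.negMulLog (-Real.log c - 1) ((fun t : ℝ => c + t * d) 0) := by
    simpa using Real.hasDerivAt_negMulLog hc
  have h3 : HasDerivAt (fun t : ℝ => Real.negMulLog (c + t * d))
      ((-Real.log c - 1) * d) 0 := by have := h2.comp 0 h1; exact this
  have h4 := hasDerivAt_iff_tendsto_slope.mp h3
  have h5 : Tendsto (slope (fun t : ℝ => Real.negMulLog (c + t * d)) 0) (𝓝[>] (0:ℝ))
      (𝓝 ((-Real.log c - 1) * d)) :=
    h4.mono_left (nhdsWithin_mono 0 fun x hx => ne_of_gt hx)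
  have : (fun t : ℝ => (Real.negMulLog (c + t * d) - Real.negMulLog c) / t)
      = slope (fun t : ℝ => Real.negMulLog (c + t * d)) 0 := by
    funext t
    simp [slope_def_field, div_eq_mul_inv]
  rw [this, mul_comm d]
  exact h5

/-- Key lemma: cross-entropy against the maxent distribution is bounded by its entropy. -/
lemma key_lemma {A : Type} [Fintype A]
    (S : Set (A → ℝ)) (hSprob : ∀ σ ∈ S, IsProb σ) (hSconv : Convex ℝ S)
    (σstar : A → ℝ) (hmem : σstar ∈ S)
    (hmax : ∀ σ ∈ S, shannonEntropy σ ≤ shannonEntropy σstar)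
    {σ : A → ℝ} (hσ : σ ∈ S) :
    crossEntropy σ σstar ≤ ENNReal.ofReal (shannonEntropy σstar) := by
  classical
  have hσp := hSprob σ hσ
  have hsp := hSprob σstar hmem
  set d : A → ℝ := fun a => σ a - σstar a with hd
  set q : A → ℝ → ℝ := fun a t =>
    (Real.negMulLog (σstar a + t * d a) - Real.negMulLog (σstar a)) / t with hq
  set Q : ℝ → ℝ := fun t => ∑ a, q a t with hQdef
  -- Q t ≤ 0 for t ∈ (0, 1]
  have hQ : ∀ t ∈ Set.Ioc (0:ℝ) 1, Q t ≤ 0 := by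
    intro t ht
    have hmemt : (fun a => σstar a + t * d a) ∈ S := by
      have := hSconv hmem hσ (by linarith [ht.2] : (0:ℝ) ≤ 1 - t) (le_of_lt ht.1) (by ring)
      convert this using 1
      funext a
      simp [hd, Pi.add_apply, Pi.smul_apply, smul_eq_mul]
      ring
    have hent := hmax _ hmemt
    rw [shannonEntropy_eq, shannonEntropy_eq] at hent
    have hQt : Q t = ((∑ a, Real.negMulLog (σstar a + t * d a))
        - ∑ a, Real.negMulLog (σstar a)) / t := by
      simp only [hQdef, hq]
      rw [← Finset.sum_sub_distrib, Finset.sum_div]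
    rw [hQt]
    apply div_nonpos_of_nonpos_of_nonneg (by linarith) (le_of_lt ht.1)
  have hQev : ∀ᶠ t in 𝓝[>] (0:ℝ), Q t ≤ 0 :=
    Filter.eventually_of_mem (Ioc_mem_nhdsGT one_pos) hQ
  -- support condition
  have hsupp : ∀ a, σstar a = 0 → σ a = 0 := by
    intro a0 hz0
    by_contra hne
    have hσa0 : 0 < σ a0 := lt_of_le_of_ne (hσp.1 a0) (Ne.symm hne)
    -- q a0 tends to atTop
    have haux : ∀ a, σstar a = 0 → ∀ t ∈ Set.Ioc (0:ℝ) 1,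
        q a t = σ a * (-Real.log t) - σ a * Real.log (σ a) := by
      intro a hz t ht
      rcases eq_or_lt_of_le (hσp.1 a) with h0 | hpos
      · simp [hq, hz, ← h0, hd]
      · simp only [hq, hd, hz, zero_add, sub_zero, Real.negMulLog_zero]
        rw [Real.negMulLog, Real.log_mul (ne_of_gt ht.1) (ne_of_gt hpos),
          div_eq_iff (ne_of_gt ht.1)]
        ring
    have htop : Tendsto (fun t => q a0 t) (𝓝[>] (0:ℝ)) atTop := by
      have h1 : Tendsto (fun t : ℝ => σ a0 * (-Real.log t) - σ a0 * Real.log (σ a0))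
          (𝓝[>] (0:ℝ)) atTop := by
        apply Filter.tendsto_atTop_add_const_right
        apply Filter.Tendsto.const_mul_atTop hσa0
        exact Filter.tendsto_neg_atBot_atTop.comp Real.tendsto_log_nhdsGT_zero
      apply h1.congr'
      filter_upwards [Ioc_mem_nhdsGT (one_pos : (0:ℝ) < 1)] with t ht
      exact (haux a0 hz0 t ht).symm
    -- lower bounds for the other terms
    have hbound : ∀ a, ∃ b : ℝ, ∀ᶠ t in 𝓝[>] (0:ℝ), b ≤ q a t := by
      intro a
      by_cases hz : σstar a = 0
      · refine ⟨σ a * 0 - σ a * Real.log (σ a), ?_⟩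
        filter_upwards [Ioc_mem_nhdsGT (one_pos : (0:ℝ) < 1)] with t ht
        rw [haux a hz t ht]
        have : 0 ≤ -Real.log t := by
          simp only [neg_nonneg]
          exact Real.log_nonpos (le_of_lt ht.1) ht.2
        nlinarith [hσp.1 a]
      · refine ⟨d a * (-Real.log (σstar a) - 1) - 1, ?_⟩
        have h := (tendsto_quot (d := d a) hz).eventually
          (eventually_gt_nhds (show d a * (-Real.log (σstar a) - 1) - 1
            < d a * (-Real.log (σstar a) - 1) by linarith))
        filter_upwards [h] with t ht using le_of_lt ht
    choose b hb using hbound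
    have hrest : ∀ᶠ t in 𝓝[>] (0:ℝ),
        ∑ a ∈ Finset.univ.erase a0, b a ≤ ∑ a ∈ Finset.univ.erase a0, q a t := by
      have h := (Filter.eventually_all_finset (Finset.univ.erase a0)
        (p := fun a t => b a ≤ q a t) (l := 𝓝[>] (0:ℝ))).mpr (fun a _ => hb a)
      filter_upwards [h] with t ht using Finset.sum_le_sum fun a ha => ht a ha
    have hQtop : Tendsto Q (𝓝[>] (0:ℝ)) atTop := by
      have hsplit : ∀ t, Q t = q a0 t + ∑ a ∈ Finset.univ.erase a0, q a t := by
        intro t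
        rw [hQdef]
        exact (Finset.add_sum_erase _ _ (Finset.mem_univ a0)).symm
      apply tendsto_atTop_mono' _ _ (Filter.tendsto_atTop_add_const_right _
        (∑ a ∈ Finset.univ.erase a0, b a) htop)
      filter_upwards [hrest] with t ht
      rw [hsplit t]
      linarith
    have := (hQtop.eventually_gt_atTop 0).and hQev
    rcases this.exists with ⟨t, h1, h2⟩
    linarith
  -- limits of the quotients
  set L : A → ℝ := fun a => if σstar a = 0 then 0 else d a * (-Real.log (σstar a) - 1) with hL
  have hlim : Tendsto Q (𝓝[>] (0:ℝ)) (𝓝 (∑ a, L a)) := by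
    apply tendsto_finset_sum
    intro a _
    by_cases hz : σstar a = 0
    · have hqz : ∀ t, q a t = 0 := by
        intro t
        simp [hq, hz, hd, hsupp a hz]
      simp only [hL, if_pos hz]
      exact (tendsto_const_nhds (x := (0:ℝ)) (f := 𝓝[>] (0:ℝ))).congr
        fun t => (hqz t).symm
    · simp only [hL, if_neg hz]
      exact tendsto_quot hz
  have hLsum : ∑ a, L a ≤ 0 :=
    le_of_tendsto hlim hQev
  -- expand ∑ L
  have hLeq : ∑ a, L a = (∑ a, σ a * (-Real.log (σstar a))) - shannonEntropy σstar := by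
    have hterm : ∀ a, L a = σ a * (-Real.log (σstar a)) - (- (σstar a * Real.log (σstar a)))
        - σ a + σstar a := by
      intro a
      by_cases hz : σstar a = 0
      · simp [hL, hz, hsupp a hz]
      · simp only [hL, if_neg hz, hd]
        ring
    rw [Finset.sum_congr rfl (fun a _ => hterm a)]
    rw [shannonEntropy]
    simp only [Finset.sum_sub_distrib, Finset.sum_add_distrib, ← Finset.sum_neg_distrib]
    rw [hσp.2, hsp.2]
    ring
  have hmain : ∑ a, σ a * (-Real.log (σstar a)) ≤ shannonEntropy σstar := by linarith
  rw [crossEntropy_eq_ofReal hσp hsp hsupp]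
  exact ENNReal.ofReal_le_ofReal hmain

/-- The maximum entropy distribution over a nonempty closed convex set `S` of
probability distributions minimizes over `S` the worst-case log-loss against an
adversary constrained to `S`. -/
theorem maxent_minimizes_worst_case_log_loss
    {A : Type} [Fintype A] [Nonempty A]
    (S : Set (A → ℝ)) (hSprob : ∀ σ ∈ S, IsProb σ) (hSne : S.Nonempty)
    (hSclosed : IsClosed S) (hSconv : Convex ℝ S)
    (σstar : A → ℝ) (hmem : σstar ∈ S)
    (hmax : ∀ σ ∈ S, shannonEntropy σ ≤ shannonEntropy σstar) :
    ∀ σhat ∈ S,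
      (⨆ σ ∈ S, crossEntropy σ σstar) ≤ ⨆ σ ∈ S, crossEntropy σ σhat := by
  intro σhat hσhat
  have h1 : (⨆ σ ∈ S, crossEntropy σ σstar) ≤ ENNReal.ofReal (shannonEntropy σstar) := by
    apply iSup₂_le
    intro σ hσ
    exact key_lemma S hSprob hSconv σstar hmem hmax hσ
  have h2 : ENNReal.ofReal (shannonEntropy σstar) ≤ crossEntropy σstar σhat :=
    gibbs (hSprob σstar hmem) (hSprob σhat hσhat)
  have h3 : crossEntropy σstar σhat ≤ ⨆ σ ∈ S, crossEntropy σ σhat :=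
    le_iSup₂ (f := fun σ _ => crossEntropy σ σhat) σstar hmem
  exact h1.trans (h2.trans h3)
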